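/- Let g : ℝ^{n_y} × ℝ^{n_z} → ℝ^{n_z} be continuously differentiable, let I ⊆ ℝ be an open interval, let y : I → ℝ^{n_y} be differentiable and z : I → ℝ^{n_z} be continuous, and suppose that for all t ∈ I: g(y(t), z(t)) = 0 and the partial Jacobian ∂g/∂z evaluated at (y(t), z(t)) is an invertible n_z×n_z matrix (the index-1 condition). Then z is differentiable on I, with z'(t) = −(∂g/∂z(y(t), z(t)))⁻¹ · ∂g/∂y(y(t), z(t)) · y'(t) for all t ∈ I. -/

import Mathlib

open Matrix

/-- Index-1 constraint differentiation: if `g(y(t), z(t)) = 0` on an open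
interval `I`, `y` is differentiable, `z` is continuous, and the partial
Jacobian `∂g/∂z` is invertible along the solution, then `z` is differentiable
with `z'(t) = -(∂g/∂z)⁻¹ ∂g/∂y y'(t)`. -/
theorem index1_algebraic_variable_differentiable {ny nz : ℕ}
    (g : (Fin ny → ℝ) → (Fin nz → ℝ) → Fin nz → ℝ)
    (hg : ContDiff ℝ 1 (fun p : (Fin ny → ℝ) × (Fin nz → ℝ) => g p.1 p.2))
    (I : Set ℝ) (hIopen : IsOpen I) (hIconn : I.OrdConnected)
    (y y' : ℝ → Fin ny → ℝ) (z : ℝ → Fin nz → ℝ)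
    (hy : ∀ t ∈ I, HasDerivAt y (y' t) t)
    (hz : ContinuousOn z I)
    (hcon : ∀ t ∈ I, g (y t) (z t) = 0)
    (Gy : ℝ → Matrix (Fin nz) (Fin ny) ℝ)
    (hGy : Gy = fun t => LinearMap.toMatrix'
      (fderiv ℝ (fun η => g η (z t)) (y t) : (Fin ny → ℝ) →ₗ[ℝ] (Fin nz → ℝ)))
    (Gz : ℝ → Matrix (Fin nz) (Fin nz) ℝ)
    (hGz : Gz = fun t => LinearMap.toMatrix'
      (fderiv ℝ (fun ζ => g (y t) ζ) (z t) : (Fin nz → ℝ) →ₗ[ℝ] (Fin nz → ℝ)))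
    (hinv : ∀ t ∈ I, IsUnit (Gz t)) :
    ∀ t ∈ I, HasDerivAt z ((-((Gz t)⁻¹ * Gy t)).mulVec (y' t)) t := by
  intro t ht
  have hG : HasStrictFDerivAt (fun p : (Fin ny → ℝ) × (Fin nz → ℝ) => g p.1 p.2)
      (fderiv ℝ (fun p : (Fin ny → ℝ) × (Fin nz → ℝ) => g p.1 p.2) (y t, z t)) (y t, z t) :=
    hg.contDiffAt.hasStrictFDerivAt one_ne_zero
  set G := fderiv ℝ (fun p : (Fin ny → ℝ) × (Fin nz → ℝ) => g p.1 p.2) (y t, z t) with hGdef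
  -- partial derivatives
  have hA : fderiv ℝ (fun η => g η (z t)) (y t)
      = G.comp (ContinuousLinearMap.inl ℝ (Fin ny → ℝ) (Fin nz → ℝ)) := by
    have h1 : HasFDerivAt (fun η => g η (z t))
        (G.comp (ContinuousLinearMap.inl ℝ (Fin ny → ℝ) (Fin nz → ℝ))) (y t) :=
      hG.hasFDerivAt.comp (f := fun η => (η, z t)) (y t) (HasFDerivAt.prodMk (hasFDerivAt_id (y t)) (hasFDerivAt_const (z t) (y t)))
    exact h1.fderiv
  have hB : fderiv ℝ (fun ζ => g (y t) ζ) (z t)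
      = G.comp (ContinuousLinearMap.inr ℝ (Fin ny → ℝ) (Fin nz → ℝ)) := by
    have h1 : HasFDerivAt (fun ζ => g (y t) ζ)
        (G.comp (ContinuousLinearMap.inr ℝ (Fin ny → ℝ) (Fin nz → ℝ))) (z t) :=
      hG.hasFDerivAt.comp (f := fun ζ => (y t, ζ)) (z t) (HasFDerivAt.prodMk (hasFDerivAt_const (y t) (z t)) (hasFDerivAt_id (z t)))
    exact h1.fderiv
  have hGyv : ∀ u, (Gy t).mulVec u = G (u, 0) := by
    intro u
    rw [hGy]
    simp only [← Matrix.toLin'_apply, Matrix.toLin'_toMatrix', hA]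
    rfl
  have hGzv : ∀ v, (Gz t).mulVec v = G (0, v) := by
    intro v
    rw [hGz]
    simp only [← Matrix.toLin'_apply, Matrix.toLin'_toMatrix', hB]
    rfl
  have hdet : IsUnit (Gz t).det := (Matrix.isUnit_iff_isUnit_det _).mp (hinv t ht)
  have hMM : (Gz t)⁻¹ * Gz t = 1 := Matrix.nonsing_inv_mul _ hdet
  have hMM' : Gz t * (Gz t)⁻¹ = 1 := Matrix.mul_nonsing_inv _ hdet
  have hsplit : ∀ u v, G (u, v) = G (u, 0) + G (0, v) := by
    intro u v
    rw [← map_add]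
    simp
  -- the derivative of Φ as a continuous linear equiv
  set f₁ : ((Fin ny → ℝ) × (Fin nz → ℝ)) →L[ℝ] ((Fin ny → ℝ) × (Fin nz → ℝ)) :=
    (ContinuousLinearMap.fst ℝ _ _).prod G with hf₁
  set Binv : (Fin nz → ℝ) →L[ℝ] (Fin nz → ℝ) :=
    LinearMap.toContinuousLinearMap ((Gz t)⁻¹).mulVecLin with hBinv
  set f₂ : ((Fin ny → ℝ) × (Fin nz → ℝ)) →L[ℝ] ((Fin ny → ℝ) × (Fin nz → ℝ)) :=
    (ContinuousLinearMap.fst ℝ _ _).prod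
      (Binv.comp ((ContinuousLinearMap.snd ℝ _ _) -
        G.comp ((ContinuousLinearMap.inl ℝ _ _).comp (ContinuousLinearMap.fst ℝ _ _)))) with hf₂
  have hf₂app : ∀ p : (Fin ny → ℝ) × (Fin nz → ℝ),
      f₂ p = (p.1, ((Gz t)⁻¹).mulVec (p.2 - G (p.1, 0))) := by
    intro p; rfl
  have h₁ : ∀ p, f₂ (f₁ p) = p := by
    intro p
    have : f₁ p = (p.1, G p) := rfl
    rw [this, hf₂app]
    have : G p = G (p.1, 0) + G (0, p.2) := by rw [← hsplit]
    rw [this]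
    simp only [add_sub_cancel_left]
    rw [← hGzv, Matrix.mulVec_mulVec, hMM, Matrix.one_mulVec]
  have h₂ : ∀ p, f₁ (f₂ p) = p := by
    intro p
    rw [hf₂app]
    have : f₁ (p.1, ((Gz t)⁻¹).mulVec (p.2 - G (p.1, 0)))
        = (p.1, G (p.1, ((Gz t)⁻¹).mulVec (p.2 - G (p.1, 0)))) := rfl
    rw [this, hsplit, ← hGzv, Matrix.mulVec_mulVec, hMM', Matrix.one_mulVec]
    simp
  set e := ContinuousLinearEquiv.equivOfInverse f₁ f₂ h₁ h₂ with he
  -- Φ and its strict derivative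
  have hΦ : HasStrictFDerivAt
      (fun p : (Fin ny → ℝ) × (Fin nz → ℝ) => (p.1, g p.1 p.2))
      (e : ((Fin ny → ℝ) × (Fin nz → ℝ)) →L[ℝ] _) (y t, z t) := by
    have : (e : ((Fin ny → ℝ) × (Fin nz → ℝ)) →L[ℝ] _) = f₁ := rfl
    rw [this, hf₁]
    exact HasStrictFDerivAt.prodMk hasStrictFDerivAt_fst hG
  set Ψ := hΦ.localInverse _ _ _ with hΨ
  have hΨderiv : HasStrictFDerivAt Ψ
      (e.symm : ((Fin ny → ℝ) × (Fin nz → ℝ)) →L[ℝ] _) (y t, g (y t) (z t)) :=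
    hΦ.to_localInverse
  have hc0 : g (y t) (z t) = 0 := hcon t ht
  -- z s = (Ψ (y s, 0)).2 near t
  have hyc : ContinuousAt y t := (hy t ht).continuousAt
  have hzc : ContinuousAt z t := hz.continuousAt (hIopen.mem_nhds ht)
  have hcont : ContinuousAt (fun s => (y s, z s)) t := hyc.prodMk hzc
  have hev1 : ∀ᶠ p in nhds (y t, z t),
      Ψ ((fun p : (Fin ny → ℝ) × (Fin nz → ℝ) => (p.1, g p.1 p.2)) p) = p :=
    hΦ.eventually_left_inverse
  have hev2 : ∀ᶠ s in nhds t, Ψ (y s, g (y s) (z s)) = (y s, z s) := hcont.eventually hev1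
  have hevI : ∀ᶠ s in nhds t, s ∈ I := hIopen.mem_nhds ht
  have hev : ∀ᶠ s in nhds t, z s = (fun s => (Ψ (y s, 0)).2) s := by
    filter_upwards [hev2, hevI] with s h2 hsI
    rw [show (0 : Fin nz → ℝ) = g (y s) (z s) from (hcon s hsI).symm, h2]
  -- differentiate s ↦ (Ψ (y s, 0)).2
  have hyd : HasDerivAt (fun s => ((y s, 0) : (Fin ny → ℝ) × (Fin nz → ℝ))) (y' t, 0) t :=
    HasDerivAt.prodMk (hy t ht) (hasDerivAt_const t 0)
  have hΨ0 : HasFDerivAt Ψ (e.symm : ((Fin ny → ℝ) × (Fin nz → ℝ)) →L[ℝ] _) (y t, 0) := by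
    have := hΨderiv.hasFDerivAt
    rwa [hc0] at this
  have hcomp : HasDerivAt (fun s => Ψ (y s, 0)) (e.symm (y' t, 0)) t :=
    hΨ0.comp_hasDerivAt (f := fun s => ((y s, 0) : (Fin ny → ℝ) × (Fin nz → ℝ))) t hyd
  have hsnd : HasDerivAt (fun s => (Ψ (y s, 0)).2) (e.symm (y' t, 0)).2 t :=
    ((ContinuousLinearMap.snd ℝ (Fin ny → ℝ) (Fin nz → ℝ)).hasFDerivAt).comp_hasDerivAt t hcomp
  have hval : (e.symm (y' t, 0)).2 = (-((Gz t)⁻¹ * Gy t)).mulVec (y' t) := by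
    have h1 : e.symm (y' t, 0) = f₂ (y' t, 0) := rfl
    rw [h1, hf₂app]
    simp only [zero_sub, ← hGyv]
    rw [Matrix.neg_mulVec, Matrix.mulVec_neg, Matrix.mulVec_mulVec]
  rw [← hval]
  exact hsnd.congr_of_eventuallyEq hev
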